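/- arXiv:0912.0668 — 3 statements merged into one kernel-verified Lean document; each statement's English description precedes it below -/
import Mathlib

section
/- Let f, g ∈ PL₀(I) and let (a,b) be an orbital of f. Then the right derivative of the conjugate g⁻¹fg at g(a) equals the right derivative of f at a, and the left derivative of g⁻¹fg at g(b) equals the left derivative of f at b. -/
open Set Filter


/-- The support of a permutation `f` of `ℝ` : the set of points moved by `f`. -/
def Supp (f : Equiv.Perm ℝ) : Set ℝ := {x : ℝ | f x ≠ x}

/-- `IsPL0 f` says that `f` is (the extension by the identity on `ℝ \ [0,1]` of) a
piecewise-linear orientation-preserving homeomorphism of the unit interval `[0,1]`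
with only finitely many breakpoints; this represents membership in `PL₀(I)`.
The finite set `B` collects the possible points of non-differentiability: away from
`B` the map is locally affine. -/
def IsPL0 (f : Equiv.Perm ℝ) : Prop :=
  StrictMono ⇑f ∧ (∀ x : ℝ, x ≤ 0 → f x = x) ∧ (∀ x : ℝ, 1 ≤ x → f x = x) ∧
    ∃ B : Finset ℝ, ∀ x : ℝ, x ∉ B → ∃ s t : ℝ, ∀ᶠ y in nhds x, f y = s * y + t

/-- `IsOrbital f a b` : the open interval `(a,b)` is an orbital of `f`, i.e. a
connected component of `Supp f` (an open interval contained in the support whose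
endpoints are fixed by `f`). -/
def IsOrbital (f : Equiv.Perm ℝ) (a b : ℝ) : Prop :=
  a < b ∧ Set.Ioo a b ⊆ Supp f ∧ f a = a ∧ f b = b

/-- Two affine functions agreeing at two distinct points are equal. -/
lemma affine_eq_of_two {s t s' t' p q : ℝ} (hp : s * p + t = s' * p + t')
    (hq : s * q + t = s' * q + t') (hpq : p ≠ q) : s = s' ∧ t = t' := by
  have h : (s - s') * (p - q) = 0 := by linear_combination hp - hq
  rcases mul_eq_zero.1 h with h1 | h1
  · have hs : s = s' := by linarith
    exact ⟨hs, by rw [hs] at hp; linarith⟩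
  · exact absurd (by linarith : p = q) hpq

/-- A locally affine function on an open interval is affine. -/
lemma affine_of_locally_affine (f : ℝ → ℝ) (c d : ℝ)
    (h : ∀ y ∈ Ioo c d, ∃ s t : ℝ, ∀ᶠ z in nhds y, f z = s * z + t) :
    ∃ s t : ℝ, ∀ y ∈ Ioo c d, f y = s * y + t := by
  rcases le_or_gt d c with hcd | hcd
  · exact ⟨1, 0, fun y hy => absurd (hy.1.trans hy.2) (not_lt.2 hcd)⟩
  have hy₀ : (c + d) / 2 ∈ Ioo c d := ⟨by linarith, by linarith⟩
  obtain ⟨s₀, t₀, h₀⟩ := h _ hy₀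
  set S : Set ℝ := {y | ∀ᶠ z in nhds y, f z = s₀ * z + t₀} with hSdef
  set V : Set ℝ := ⋃ (p : ℝ × ℝ) (_ : p ≠ (s₀, t₀)), {y | ∀ᶠ z in nhds y, f z = p.1 * z + p.2}
    with hVdef
  have hS : IsOpen S := isOpen_setOf_eventually_nhds
  have hV : IsOpen V := by
    refine isOpen_iUnion fun p => isOpen_iUnion fun _ => isOpen_setOf_eventually_nhds
  have cover : Ioo c d ⊆ S ∪ V := by
    intro y hy
    obtain ⟨s, t, hst⟩ := h y hy
    by_cases hp : (s, t) = (s₀, t₀)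
    · left
      obtain ⟨hs, ht⟩ := Prod.mk.injEq .. ▸ hp
      rw [hs, ht] at hst
      exact hst
    · right
      exact mem_iUnion.2 ⟨(s, t), mem_iUnion.2 ⟨hp, hst⟩⟩
  have disj : ∀ x, x ∈ S → x ∈ V → False := by
    intro x hxS hxV
    obtain ⟨p, hp⟩ := mem_iUnion.1 hxV
    obtain ⟨hpne, hpx⟩ := mem_iUnion.1 hp
    have hboth : ∀ᶠ z in nhds x, f z = s₀ * z + t₀ ∧ f z = p.1 * z + p.2 := hxS.and hpx
    obtain ⟨ε, hε, hball⟩ := Metric.eventually_nhds_iff.1 hboth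
    have h1 := hball (show dist x x < ε by simpa using hε)
    have h2 := hball (show dist (x + ε / 2) x < ε by
      rw [Real.dist_eq]; rw [abs_of_nonneg (by linarith)]; linarith)
    have e1 : s₀ * x + t₀ = p.1 * x + p.2 := h1.1 ▸ h1.2
    have e2 : s₀ * (x + ε / 2) + t₀ = p.1 * (x + ε / 2) + p.2 := h2.1 ▸ h2.2
    obtain ⟨hs, ht⟩ := affine_eq_of_two e1 e2 (by intro hh; linarith)
    exact hpne (Prod.ext hs.symm ht.symm)
  have hsub : Ioo c d ⊆ S := by
    intro y hy
    rcases cover hy with hyS | hyV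
    · exact hyS
    · exfalso
      obtain ⟨z, hzI, hzS, hzV⟩ := isPreconnected_Ioo (a := c) (b := d) S V hS hV cover
        ⟨_, hy₀, h₀⟩ ⟨y, hy, hyV⟩
      exact disj z hzS hzV
  exact ⟨s₀, t₀, fun y hy => (hsub hy).self_of_nhds⟩

/-- A finite set admits a punctured neighborhood of any point. -/
lemma exists_gap (B : Finset ℝ) (x : ℝ) :
    ∃ δ > (0:ℝ), ∀ y ∈ B, y ≠ x → δ ≤ |y - x| := by
  rcases (B.erase x).eq_empty_or_nonempty with he | hne
  · exact ⟨1, one_pos, fun y hy hyx => absurd (Finset.mem_erase.2 ⟨hyx, hy⟩) (he ▸ Finset.notMem_empty y)⟩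
  · have hCne : ((B.erase x).image (fun b => |b - x|)).Nonempty := hne.image _
    refine ⟨((B.erase x).image (fun b => |b - x|)).min' hCne, ?_, ?_⟩
    · obtain ⟨b, hb, hbeq⟩ := Finset.mem_image.1 (Finset.min'_mem _ hCne)
      rw [← hbeq]
      exact abs_pos.2 (sub_ne_zero.2 (Finset.mem_erase.1 hb).1)
    · intro y hy hyx
      exact Finset.min'_le _ _ (Finset.mem_image.2 ⟨y, Finset.mem_erase.2 ⟨hyx, hy⟩, rfl⟩)

/-- A strictly monotone bijection that is affine on `(a, a+δ)` extends the affine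
formula continuously to `a` (from the right), with positive slope. -/
lemma affine_right_at (f : Equiv.Perm ℝ) (hmono : StrictMono ⇑f) {a δ s t : ℝ} (hδ : 0 < δ)
    (haff : ∀ y ∈ Ioo a (a + δ), f y = s * y + t) :
    0 < s ∧ ∀ u ∈ Ioo (0:ℝ) δ, f (a + u) = f a + s * u := by
  have key : ∀ u ∈ Ioo (0:ℝ) δ, f (a + u) = s * a + t + s * u := by
    intro u hu
    have := haff (a + u) ⟨by linarith [hu.1], by linarith [hu.2]⟩
    rw [this]; ring
  have hs : 0 < s := by
    have h1 := key (δ/3) ⟨by linarith, by linarith⟩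
    have h2 := key (δ/2) ⟨by linarith, by linarith⟩
    have := hmono (show a + δ/3 < a + δ/2 by linarith)
    rw [h1, h2] at this
    nlinarith
  set c := s * a + t with hc
  have hge : f a ≤ c := by
    by_contra hlt
    push_neg at hlt
    set u := min (δ/2) ((f a - c)/(2*s)) with hu
    have hu0 : 0 < u := lt_min (by linarith) (div_pos (by linarith) (by linarith))
    have huδ : u < δ := lt_of_le_of_lt (min_le_left _ _) (by linarith)
    have h1 : f a < f (a + u) := hmono (by linarith)
    have h2 := key u ⟨hu0, huδ⟩
    have h3 : s * u ≤ (f a - c)/2 := by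
      have : u ≤ (f a - c)/(2*s) := min_le_right _ _
      calc s * u ≤ s * ((f a - c)/(2*s)) := by nlinarith
        _ = (f a - c)/2 := by field_simp
    rw [h2] at h1
    linarith
  have hle : c ≤ f a := by
    by_contra hlt
    push_neg at hlt
    set z := (f a + c)/2 with hz
    set w := f.symm z with hw
    have hfw : f w = z := f.apply_symm_apply z
    have hwa : a < w := by
      by_contra hle'
      push_neg at hle'
      have : f w ≤ f a := hmono.le_iff_le.2 hle'
      rw [hfw] at this; simp only [hz] at this; linarith
    have hwu : ∀ u ∈ Ioo (0:ℝ) δ, w < a + u := by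
      intro u hu
      have : f w < f (a + u) := by
        rw [hfw, key u hu]
        have : 0 < s * u := mul_pos hs hu.1
        simp only [hz]; nlinarith [hu.1]
      exact hmono.lt_iff_lt.1 this
    set u := min (δ/2) (w - a) with hu
    have hu0 : 0 < u := lt_min (by linarith) (by linarith)
    have huδ : u < δ := lt_of_le_of_lt (min_le_left _ _) (by linarith)
    have := hwu u ⟨hu0, huδ⟩
    have : u ≤ w - a := min_le_right _ _
    linarith [hwu u ⟨hu0, huδ⟩]
  have hca : c = f a := le_antisymm hle hge
  exact ⟨hs, fun u hu => by rw [key u hu, ← hca]⟩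

/-- Mirror of `affine_right_at` on the left. -/
lemma affine_left_at (f : Equiv.Perm ℝ) (hmono : StrictMono ⇑f) {b δ s t : ℝ} (hδ : 0 < δ)
    (haff : ∀ y ∈ Ioo (b - δ) b, f y = s * y + t) :
    0 < s ∧ ∀ u ∈ Ioo (0:ℝ) δ, f (b - u) = f b - s * u := by
  have key : ∀ u ∈ Ioo (0:ℝ) δ, f (b - u) = s * b + t - s * u := by
    intro u hu
    have := haff (b - u) ⟨by linarith [hu.2], by linarith [hu.1]⟩
    rw [this]; ring
  have hs : 0 < s := by
    have h1 := key (δ/2) ⟨by linarith, by linarith⟩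
    have h2 := key (δ/3) ⟨by linarith, by linarith⟩
    have := hmono (show b - δ/2 < b - δ/3 by linarith)
    rw [h1, h2] at this
    nlinarith
  set c := s * b + t with hc
  have hle : c ≤ f b := by
    by_contra hlt
    push_neg at hlt
    set u := min (δ/2) ((c - f b)/(2*s)) with hu
    have hu0 : 0 < u := lt_min (by linarith) (div_pos (by linarith) (by linarith))
    have huδ : u < δ := lt_of_le_of_lt (min_le_left _ _) (by linarith)
    have h1 : f (b - u) < f b := hmono (by linarith)
    have h2 := key u ⟨hu0, huδ⟩
    have h3 : s * u ≤ (c - f b)/2 := by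
      have : u ≤ (c - f b)/(2*s) := min_le_right _ _
      calc s * u ≤ s * ((c - f b)/(2*s)) := by nlinarith
        _ = (c - f b)/2 := by field_simp
    rw [h2] at h1
    linarith
  have hge : f b ≤ c := by
    by_contra hlt
    push_neg at hlt
    set z := (f b + c)/2 with hz
    set w := f.symm z with hw
    have hfw : f w = z := f.apply_symm_apply z
    have hwb : w < b := by
      by_contra hle'
      push_neg at hle'
      have : f b ≤ f w := hmono.le_iff_le.2 hle'
      rw [hfw] at this; simp only [hz] at this; linarith
    have hwu : ∀ u ∈ Ioo (0:ℝ) δ, b - u < w := by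
      intro u hu
      have : f (b - u) < f w := by
        rw [hfw, key u hu]
        have : 0 < s * u := mul_pos hs hu.1
        simp only [hz]; nlinarith [hu.1]
      exact hmono.lt_iff_lt.1 this
    set u := min (δ/2) (b - w) with hu
    have hu0 : 0 < u := lt_min (by linarith) (by linarith)
    have huδ : u < δ := lt_of_le_of_lt (min_le_left _ _) (by linarith)
    have h1 := hwu u ⟨hu0, huδ⟩
    have h2 : u ≤ b - w := min_le_right _ _
    linarith
  have hcb : c = f b := le_antisymm hle hge
  exact ⟨hs, fun u hu => by rw [key u hu, ← hcb]⟩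

/-- A PL₀ map has a well-defined right slope at every point. -/
lemma rightSlope (f : Equiv.Perm ℝ) (hf : IsPL0 f) (a : ℝ) :
    ∃ σ > (0:ℝ), ∃ δ > (0:ℝ), ∀ u ∈ Ioo (0:ℝ) δ, f (a + u) = f a + σ * u := by
  obtain ⟨B, hB⟩ := hf.2.2.2
  obtain ⟨δ, hδ, hgap⟩ := exists_gap B a
  obtain ⟨s, t, haff⟩ := affine_of_locally_affine (⇑f) a (a + δ) (by
    intro y hy
    refine hB y (fun hyB => ?_)
    have h1 : y ≠ a := ne_of_gt hy.1
    have := hgap y hyB h1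
    rw [abs_of_pos (by linarith [hy.1] : (0:ℝ) < y - a)] at this
    linarith [hy.2])
  obtain ⟨hs, hform⟩ := affine_right_at f hf.1 hδ haff
  exact ⟨s, hs, δ, hδ, hform⟩

/-- A PL₀ map has a well-defined left slope at every point. -/
lemma leftSlope (f : Equiv.Perm ℝ) (hf : IsPL0 f) (b : ℝ) :
    ∃ σ > (0:ℝ), ∃ δ > (0:ℝ), ∀ u ∈ Ioo (0:ℝ) δ, f (b - u) = f b - σ * u := by
  obtain ⟨B, hB⟩ := hf.2.2.2
  obtain ⟨δ, hδ, hgap⟩ := exists_gap B b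
  obtain ⟨s, t, haff⟩ := affine_of_locally_affine (⇑f) (b - δ) b (by
    intro y hy
    refine hB y (fun hyB => ?_)
    have h1 : y ≠ b := ne_of_lt hy.2
    have := hgap y hyB h1
    rw [abs_of_neg (by linarith [hy.2] : y - b < 0)] at this
    linarith [hy.1])
  obtain ⟨hs, hform⟩ := affine_left_at f hf.1 hδ haff
  exact ⟨s, hs, δ, hδ, hform⟩

/-- One-sided derivative (from the right) of a function affine to the right. -/
lemma derivWithin_of_affine_right (F : ℝ → ℝ) (p q σ δ : ℝ) (hδ : 0 < δ) (hp : F p = q)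
    (h : ∀ u ∈ Ioo (0:ℝ) δ, F (p + u) = q + σ * u) :
    derivWithin F (Ioi p) p = σ := by
  have hG : HasDerivWithinAt (fun y => q + σ * (y - p)) σ (Ioi p) p := by
    have h1 : HasDerivAt (fun y : ℝ => q + σ * (y - p)) (σ * 1) p :=
      HasDerivAt.const_add q (HasDerivAt.const_mul σ ((hasDerivAt_id p).sub_const p))
    simpa using h1.hasDerivWithinAt
  have heq : F =ᶠ[nhdsWithin p (Ioi p)] fun y => q + σ * (y - p) := by
    have h1 : ∀ᶠ y in nhdsWithin p (Ioi p), y < p + δ :=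
      (eventually_lt_nhds (by linarith : p < p + δ)).filter_mono nhdsWithin_le_nhds
    have h2 : ∀ᶠ y in nhdsWithin p (Ioi p), y ∈ Ioi p := eventually_mem_nhdsWithin
    filter_upwards [h1, h2] with y hy1 hy2
    have h3 := h (y - p) ⟨sub_pos.2 hy2, by linarith⟩
    have h4 : p + (y - p) = y := by ring
    rw [h4] at h3
    exact h3
  have : HasDerivWithinAt F σ (Ioi p) p :=
    hG.congr_of_eventuallyEq heq (by simp [hp])
  exact this.derivWithin (uniqueDiffWithinAt_Ioi p)

/-- One-sided derivative (from the left) of a function affine to the left. -/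
lemma derivWithin_of_affine_left (F : ℝ → ℝ) (p q σ δ : ℝ) (hδ : 0 < δ) (hp : F p = q)
    (h : ∀ u ∈ Ioo (0:ℝ) δ, F (p - u) = q - σ * u) :
    derivWithin F (Iio p) p = σ := by
  have hG : HasDerivWithinAt (fun y => q + σ * (y - p)) σ (Iio p) p := by
    have h1 : HasDerivAt (fun y : ℝ => q + σ * (y - p)) (σ * 1) p :=
      HasDerivAt.const_add q (HasDerivAt.const_mul σ ((hasDerivAt_id p).sub_const p))
    simpa using h1.hasDerivWithinAt
  have heq : F =ᶠ[nhdsWithin p (Iio p)] fun y => q + σ * (y - p) := by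
    have h1 : ∀ᶠ y in nhdsWithin p (Iio p), p - δ < y :=
      (eventually_gt_nhds (by linarith : p - δ < p)).filter_mono nhdsWithin_le_nhds
    have h2 : ∀ᶠ y in nhdsWithin p (Iio p), y ∈ Iio p := eventually_mem_nhdsWithin
    filter_upwards [h1, h2] with y hy1 hy2
    have h3 := h (p - y) ⟨sub_pos.2 hy2, by linarith⟩
    have h4 : p - (p - y) = y := by ring
    rw [h4] at h3
    rw [h3]; ring
  have : HasDerivWithinAt F σ (Iio p) p :=
    hG.congr_of_eventuallyEq heq (by simp [hp])
  exact this.derivWithin (uniqueDiffWithinAt_Iio p)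


/-- If `(a,b)` is an orbital of `f`, then the conjugate `f^g = g⁻¹fg` (right-action
convention; the element `g * f * g⁻¹` in Mathlib's left-action convention) has the
same leading slope at `g a` (derivative from the right) and the same trailing slope
at `g b` (derivative from the left) as `f` has at `a` and `b` respectively. -/
theorem conj_leading_trailing_slopes (f g : Equiv.Perm ℝ)
    (hf : IsPL0 f) (hg : IsPL0 g) (a b : ℝ) (horb : IsOrbital f a b) :
    derivWithin (⇑(g * f * g⁻¹)) (Set.Ioi (g a)) (g a) = derivWithin (⇑f) (Set.Ioi a) a ∧
    derivWithin (⇑(g * f * g⁻¹)) (Set.Iio (g b)) (g b) = derivWithin (⇑f) (Set.Iio b) b := by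
  obtain ⟨hab, hsupp, ha, hb⟩ := horb
  constructor
  · obtain ⟨σf, hσf, δf, hδf, hF⟩ := rightSlope f hf a
    obtain ⟨σg, hσg, δg, hδg, hG⟩ := rightSlope g hg a
    rw [ha] at hF
    set m := min δg (min δf (δg / σf)) with hm
    set η := σg * m with hη
    have hmpos : 0 < m := lt_min hδg (lt_min hδf (div_pos hδg hσf))
    have hηpos : 0 < η := mul_pos hσg hmpos
    have hconj : ∀ u ∈ Ioo (0:ℝ) η, (g * f * g⁻¹) (g a + u) = g a + σf * u := by
      intro u hu
      set u' := u / σg with hu'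
      have hu'0 : 0 < u' := div_pos hu.1 hσg
      have hu'm : u' < m := (div_lt_iff₀ hσg).2 (by rw [mul_comm]; exact hu.2)
      have hu'δg : u' < δg := lt_of_lt_of_le hu'm (min_le_left _ _)
      have hu'δf : u' < δf := lt_of_lt_of_le hu'm ((min_le_right _ _).trans (min_le_left _ _))
      have hu'q : σf * u' < δg := by
        have : u' < δg / σf := lt_of_lt_of_le hu'm ((min_le_right _ _).trans (min_le_right _ _))
        rw [lt_div_iff₀ hσf] at this; linarith [this]
      have e1 : g (a + u') = g a + u := by
        rw [hG u' ⟨hu'0, hu'δg⟩, hu', mul_comm, div_mul_cancel₀ u (ne_of_gt hσg)]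
      have e2 : (g⁻¹ : Equiv.Perm ℝ) (g a + u) = a + u' := by
        rw [← e1, Equiv.Perm.inv_def, Equiv.symm_apply_apply]
      rw [Equiv.Perm.mul_apply, Equiv.Perm.mul_apply, e2, hF u' ⟨hu'0, hu'δf⟩,
        hG (σf * u') ⟨mul_pos hσf hu'0, hu'q⟩]
      congr 1
      rw [hu']
      field_simp
    have hval : (g * f * g⁻¹) (g a) = g a := by
      rw [Equiv.Perm.mul_apply, Equiv.Perm.mul_apply, Equiv.Perm.inv_def, Equiv.symm_apply_apply, ha]
    rw [derivWithin_of_affine_right (⇑(g * f * g⁻¹)) (g a) (g a) σf η hηpos hval hconj,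
      derivWithin_of_affine_right (⇑f) a a σf δf hδf ha hF]
  · obtain ⟨σf, hσf, δf, hδf, hF⟩ := leftSlope f hf b
    obtain ⟨σg, hσg, δg, hδg, hG⟩ := leftSlope g hg b
    rw [hb] at hF
    set m := min δg (min δf (δg / σf)) with hm
    set η := σg * m with hη
    have hmpos : 0 < m := lt_min hδg (lt_min hδf (div_pos hδg hσf))
    have hηpos : 0 < η := mul_pos hσg hmpos
    have hconj : ∀ u ∈ Ioo (0:ℝ) η, (g * f * g⁻¹) (g b - u) = g b - σf * u := by
      intro u hu
      set u' := u / σg with hu'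
      have hu'0 : 0 < u' := div_pos hu.1 hσg
      have hu'm : u' < m := (div_lt_iff₀ hσg).2 (by rw [mul_comm]; exact hu.2)
      have hu'δg : u' < δg := lt_of_lt_of_le hu'm (min_le_left _ _)
      have hu'δf : u' < δf := lt_of_lt_of_le hu'm ((min_le_right _ _).trans (min_le_left _ _))
      have hu'q : σf * u' < δg := by
        have : u' < δg / σf := lt_of_lt_of_le hu'm ((min_le_right _ _).trans (min_le_right _ _))
        rw [lt_div_iff₀ hσf] at this; linarith [this]
      have e1 : g (b - u') = g b - u := by
        rw [hG u' ⟨hu'0, hu'δg⟩, hu', mul_comm, div_mul_cancel₀ u (ne_of_gt hσg)]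
      have e2 : (g⁻¹ : Equiv.Perm ℝ) (g b - u) = b - u' := by
        rw [← e1, Equiv.Perm.inv_def, Equiv.symm_apply_apply]
      rw [Equiv.Perm.mul_apply, Equiv.Perm.mul_apply, e2, hF u' ⟨hu'0, hu'δf⟩,
        hG (σf * u') ⟨mul_pos hσf hu'0, hu'q⟩]
      congr 1
      rw [hu']
      field_simp
    have hval : (g * f * g⁻¹) (g b) = g b := by
      rw [Equiv.Perm.mul_apply, Equiv.Perm.mul_apply, Equiv.Perm.inv_def, Equiv.symm_apply_apply, hb]
    rw [derivWithin_of_affine_left (⇑(g * f * g⁻¹)) (g b) (g b) σf η hηpos hval hconj,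
      derivWithin_of_affine_left (⇑f) b b σf δf hδf hb hF]
end

section
/- Let f, g ∈ PL₀(I) with fg = gf. If A is an orbital of f, then either A is disjoint from the support of g, or A is also an orbital of g. -/
theorem Equiv.Perm.apply_inv_self (f : Equiv.Perm ℝ) (x : ℝ) : f (f⁻¹ x) = x :=
  Equiv.apply_symm_apply f x

theorem Equiv.Perm.inv_apply_self (f : Equiv.Perm ℝ) (x : ℝ) : f⁻¹ (f x) = x :=
  Equiv.symm_apply_apply f x

lemma perm_continuous (f : Equiv.Perm ℝ) (hf : StrictMono ⇑f) : Continuous ⇑f :=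
  (StrictMono.orderIsoOfSurjective ⇑f hf f.surjective).continuous

lemma inv_strictMono (g : Equiv.Perm ℝ) (hg : StrictMono ⇑g) : StrictMono ⇑g⁻¹ := by
  intro x y hxy
  by_contra h
  push_neg at h
  have h2 : y ≤ x := by
    have := hg.monotone h
    simpa using this
  exact absurd hxy (not_lt.mpr h2)

lemma comm_apply {f g : Equiv.Perm ℝ} (hcomm : f * g = g * f) (x : ℝ) :
    f (g x) = g (f x) := by
  have := congrArg (fun e : Equiv.Perm ℝ => e x) hcomm
  simpa [Equiv.Perm.mul_apply] using this

lemma loc_affine_nonpos {h : ℝ → ℝ} {c d : ℝ} (hcd : c < d)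
    (hcont : Continuous h)
    (haff : ∀ x ∈ Set.Ioo c d, ∃ s t : ℝ, ∀ᶠ y in nhds x, h y = s * y + t)
    (hc : h c = 0) (hd : h d = 0) : ∀ x ∈ Set.Ioo c d, h x ≤ 0 := by
  by_contra hcon
  push_neg at hcon
  obtain ⟨x₀, hx₀, hx₀pos⟩ := hcon
  obtain ⟨xm, hxm, hmax⟩ := isCompact_Icc.exists_isMaxOn (Set.nonempty_Icc.mpr hcd.le)
    hcont.continuousOn
  set M := h xm with hM
  have hMpos : 0 < M := lt_of_lt_of_le hx₀pos (hmax (Set.mem_Icc_of_Ioo hx₀))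
  set K := Set.Icc c d ∩ h ⁻¹' {M} with hK
  have hKclosed : IsClosed K := isClosed_Icc.inter (isClosed_singleton.preimage hcont)
  have hKne : K.Nonempty := ⟨xm, hxm, rfl⟩
  have hKbdd : BddBelow K := ⟨c, fun x hx => hx.1.1⟩
  set z := sInf K with hz
  have hzK : z ∈ K := hKclosed.csInf_mem hKne hKbdd
  have hzc : c < z := by
    rcases lt_or_eq_of_le hzK.1.1 with h' | h'
    · exact h'
    · exfalso; have : h z = M := hzK.2
      rw [← h'] at this; rw [hc] at this; linarith
  have hzd : z < d := by
    rcases lt_or_eq_of_le hzK.1.2 with h' | h'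
    · exact h'
    · exfalso; have : h z = M := hzK.2
      rw [h'] at this; rw [hd] at this; linarith
  obtain ⟨s, t, hev⟩ := haff z ⟨hzc, hzd⟩
  obtain ⟨ε, hε, hball⟩ := Metric.eventually_nhds_iff.mp hev
  set m₁ := min (ε/2) ((z-c)/2) with hm₁
  set m₂ := min (ε/2) ((d-z)/2) with hm₂
  have hm₁pos : 0 < m₁ := lt_min (by linarith) (by linarith)
  have hm₂pos : 0 < m₂ := lt_min (by linarith) (by linarith)
  set y₁ := z - m₁ with hy₁
  set y₂ := z + m₂ with hy₂
  have hy₁c : c < y₁ := by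
    have : m₁ ≤ (z-c)/2 := min_le_right _ _
    simp only [hy₁]; linarith
  have hy₁z : y₁ < z := by simp only [hy₁]; linarith
  have hy₂z : z < y₂ := by simp only [hy₂]; linarith
  have hy₂d : y₂ < d := by
    have : m₂ ≤ (d-z)/2 := min_le_right _ _
    simp only [hy₂]; linarith
  have hd₁ : dist y₁ z < ε := by
    rw [Real.dist_eq]
    have : m₁ ≤ ε/2 := min_le_left _ _
    rw [abs_of_nonpos (by simp only [hy₁]; linarith)]
    simp only [hy₁]; linarith
  have hd₂ : dist y₂ z < ε := by
    rw [Real.dist_eq]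
    have : m₂ ≤ ε/2 := min_le_left _ _
    rw [abs_of_nonneg (by simp only [hy₂]; linarith)]
    simp only [hy₂]; linarith
  have hhz : h z = s * z + t := hball (by simp [hε])
  have hh₁ : h y₁ = s * y₁ + t := hball hd₁
  have hh₂ : h y₂ = s * y₂ + t := hball hd₂
  have hzM : h z = M := hzK.2
  have hle₁ : h y₁ ≤ M := hmax ⟨hy₁c.le, by linarith⟩
  have hle₂ : h y₂ ≤ M := hmax ⟨by linarith, hy₂d.le⟩
  have hs0 : s = 0 := by nlinarith [hh₁, hh₂, hhz, hle₁, hle₂]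
  have : y₁ ∈ K := by
    refine ⟨⟨hy₁c.le, by linarith⟩, ?_⟩
    simp only [Set.mem_preimage, Set.mem_singleton_iff]
    rw [hh₁, hs0, ← hzM, hhz, hs0]; ring
  have : z ≤ y₁ := csInf_le hKbdd this
  linarith

/-- An interval with fixed endpoints and no fixed interior point must contain a
point where `f` fails to be locally affine. -/
lemma orbital_no_affine {f : Equiv.Perm ℝ} {c d : ℝ}
    (hcont : Continuous ⇑f)
    (haff : ∀ x ∈ Set.Ioo c d, ∃ s t : ℝ, ∀ᶠ y in nhds x, f y = s * y + t)
    (horb : IsOrbital f c d) : False := by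
  obtain ⟨hcd, hsupp, hfc, hfd⟩ := horb
  set h : ℝ → ℝ := fun y => f y - y with hh
  have hhcont : Continuous h := hcont.sub continuous_id
  have haff1 : ∀ x ∈ Set.Ioo c d, ∃ s t : ℝ, ∀ᶠ y in nhds x, h y = s * y + t := by
    intro x hx
    obtain ⟨s, t, hev⟩ := haff x hx
    exact ⟨s - 1, t, hev.mono fun y hy => by simp only [hh]; rw [hy]; ring⟩
  have haff2 : ∀ x ∈ Set.Ioo c d, ∃ s t : ℝ, ∀ᶠ y in nhds x, -h y = s * y + t := by
    intro x hx
    obtain ⟨s, t, hev⟩ := haff x hx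
    exact ⟨1 - s, -t, hev.mono fun y hy => by simp only [hh]; rw [hy]; ring⟩
  have h1 := loc_affine_nonpos hcd hhcont haff1 (by simp [hh, hfc]) (by simp [hh, hfd])
  have h2 := loc_affine_nonpos hcd hhcont.neg haff2 (by simp [hh, hfc]) (by simp [hh, hfd])
  have hmid : (c + d) / 2 ∈ Set.Ioo c d := ⟨by linarith, by linarith⟩
  have := h1 _ hmid
  have := h2 _ hmid
  have : f ((c + d) / 2) = (c + d) / 2 := by simp only [hh, Pi.neg_apply] at *; linarith
  exact hsupp hmid this

lemma map_orbital {f g : Equiv.Perm ℝ} (hg : StrictMono ⇑g)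
    (hcomm : f * g = g * f) {c d : ℝ} (horb : IsOrbital f c d) :
    IsOrbital f (g c) (g d) := by
  obtain ⟨hcd, hsupp, hfc, hfd⟩ := horb
  have hpt : ∀ x, f (g x) = g (f x) := comm_apply hcomm
  have hpt' : ∀ x, f (g⁻¹ x) = g⁻¹ (f x) := by
    intro x
    have h1 := hpt (g⁻¹ x)
    have h2 : g (g⁻¹ x) = x := Equiv.Perm.apply_inv_self g x
    rw [h2] at h1
    have := congrArg (⇑g⁻¹) h1
    rw [Equiv.Perm.inv_apply_self] at this
    exact this.symm
  refine ⟨hg hcd, ?_, by rw [hpt, hfc], by rw [hpt, hfd]⟩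
  intro x hx hfx
  have hy : g⁻¹ x ∈ Set.Ioo c d := by
    constructor
    · have : g c < g (g⁻¹ x) := by rw [Equiv.Perm.apply_inv_self]; exact hx.1
      exact hg.lt_iff_lt.mp this
    · have : g (g⁻¹ x) < g d := by rw [Equiv.Perm.apply_inv_self]; exact hx.2
      exact hg.lt_iff_lt.mp this
  apply hsupp hy
  show f (g⁻¹ x) = g⁻¹ x
  rw [hpt', hfx]

lemma push {f g : Equiv.Perm ℝ} (hf : IsPL0 f) (hg : StrictMono ⇑g)
    (hcomm : f * g = g * f) {a b : ℝ} (horb : IsOrbital f a b) (hba : b ≤ g a) :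
    False := by
  obtain ⟨hmono, -, -, B, hB⟩ := hf
  have hcont := perm_continuous f hmono
  set u : ℕ → ℝ := fun n => (⇑g)^[n] a with hu
  set v : ℕ → ℝ := fun n => (⇑g)^[n] b with hv
  have husucc : ∀ n, u (n+1) = g (u n) := fun n => Function.iterate_succ_apply' _ _ _
  have hvsucc : ∀ n, v (n+1) = g (v n) := fun n => Function.iterate_succ_apply' _ _ _
  have horbn : ∀ n, IsOrbital f (u n) (v n) := by
    intro n
    induction n with
    | zero => exact horb
    | succ n ih =>
      rw [husucc, hvsucc]
      exact map_orbital hg hcomm ih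
  have hustep : ∀ n, u n < u (n+1) := by
    intro n
    induction n with
    | zero =>
      show u 0 < u 1
      have h0 : u 0 = a := rfl
      rw [h0, husucc, h0]
      exact lt_of_lt_of_le horb.1 hba
    | succ n ih =>
      rw [husucc (n+1), husucc n]
      exact hg (by rwa [← husucc n])
  have humono : StrictMono u := strictMono_nat_of_lt_succ hustep
  have hvu : ∀ n, v n ≤ u (n+1) := by
    intro n
    induction n with
    | zero =>
      show v 0 ≤ u 1
      rw [husucc]; exact hba
    | succ n ih =>
      rw [hvsucc, husucc (n+1)]
      exact hg.monotone ih
  have hbreak : ∀ n, ∃ β : ℝ, β ∈ B ∧ β ∈ Set.Ioo (u n) (v n) := by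
    intro n
    by_contra hno
    push_neg at hno
    apply orbital_no_affine hcont _ (horbn n)
    intro x hx
    apply hB
    intro hxB
    exact absurd hx (hno x hxB)
  choose β hβB hβmem using hbreak
  have hβmono : StrictMono β := by
    intro n m hnm
    calc β n < v n := (hβmem n).2
      _ ≤ u (n+1) := hvu n
      _ ≤ u m := humono.monotone hnm
      _ < β m := (hβmem m).1
  have : Set.range β ⊆ ↑B := by
    rintro x ⟨n, rfl⟩; exact hβB n
  exact (Set.infinite_range_of_injective hβmono.injective) (B.finite_toSet.subset this)

/-- Commuting PL₀ maps fix each other's orbital endpoints. -/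
lemma endfix {f g : Equiv.Perm ℝ} (hf : IsPL0 f) (hg : IsPL0 g)
    (hcomm : f * g = g * f) {a b : ℝ} (horb : IsOrbital f a b) :
    g a = a ∧ g b = b := by
  have hgm : StrictMono ⇑g := hg.1
  have hgim : StrictMono ⇑g⁻¹ := inv_strictMono g hgm
  have hc : Commute f g := hcomm
  have hcomm' : f * g⁻¹ = g⁻¹ * f := hc.inv_right
  have hpt : ∀ x, f (g x) = g (f x) := comm_apply hcomm
  have hpt' : ∀ x, f (g⁻¹ x) = g⁻¹ (f x) := comm_apply hcomm'
  have notin : ∀ x : ℝ, f x = x → x ∉ Set.Ioo a b := fun x hx hmem => horb.2.1 hmem hx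
  have hfga : f (g a) = g a := by rw [hpt, horb.2.2.1]
  have hfgb : f (g b) = g b := by rw [hpt, horb.2.2.2]
  constructor
  · rcases lt_trichotomy (g a) a with h | h | h
    · exfalso
      have hgia : a < g⁻¹ a := by
        have := hgim h
        rwa [Equiv.Perm.inv_apply_self] at this
      have hfix : f (g⁻¹ a) = g⁻¹ a := by rw [hpt', horb.2.2.1]
      have : b ≤ g⁻¹ a := by
        by_contra hlt
        push_neg at hlt
        exact notin _ hfix ⟨hgia, hlt⟩
      exact push hf hgim hcomm' horb this
    · exact h
    · exfalso
      have : b ≤ g a := by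
        by_contra hlt
        push_neg at hlt
        exact notin _ hfga ⟨h, hlt⟩
      exact push hf hgm hcomm horb this
  · rcases lt_trichotomy (g b) b with h | h | h
    · exfalso
      have hle : g b ≤ a := by
        by_contra hlt
        push_neg at hlt
        exact notin _ hfgb ⟨hlt, h⟩
      have : b ≤ g⁻¹ a := by
        have := hgim.monotone hle
        rwa [Equiv.Perm.inv_apply_self] at this
      exact push hf hgim hcomm' horb this
    · exact h
    · exfalso
      have hgib : g⁻¹ b < b := by
        have := hgim h
        rwa [Equiv.Perm.inv_apply_self] at this
      have hfix : f (g⁻¹ b) = g⁻¹ b := by rw [hpt', horb.2.2.2]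
      have hgia : a < g⁻¹ b := by
        have : a < b := horb.1
        by_contra hle
        push_neg at hle
        -- g⁻¹ b ≤ a, then b ≤ g a
        have hba : b ≤ g a := by
          have := hgm.monotone hle
          rwa [Equiv.Perm.apply_inv_self] at this
        exact push hf hgm hcomm horb hba
      exact notin _ hfix ⟨hgia, hgib⟩

/-- If `f, g ∈ PL₀(I)` commute and `A` is an orbital of `f`, then either `A` is
disjoint from the support of `g`, or `A` is also an orbital of `g`. -/
theorem commute_orbital_disjoint_or_eq (f g : Equiv.Perm ℝ)
    (hf : IsPL0 f) (hg : IsPL0 g) (hcomm : f * g = g * f) (a b : ℝ)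
    (horb : IsOrbital f a b) :
    Disjoint (Set.Ioo a b) (Supp g) ∨ IsOrbital g a b := by
  by_cases hdisj : ∀ x ∈ Set.Ioo a b, g x = x
  · left
    rw [Set.disjoint_left]
    intro x hx hxs
    exact hxs (hdisj x hx)
  · right
    push_neg at hdisj
    obtain ⟨x₀, hx₀, hgx₀⟩ := hdisj
    obtain ⟨hga, hgb⟩ := endfix hf hg hcomm horb
    have hgcont := perm_continuous g hg.1
    have hfixclosed : IsClosed {x : ℝ | g x = x} := isClosed_eq hgcont continuous_id
    -- left suborbital endpoint
    set S := Set.Icc a x₀ ∩ {x : ℝ | g x = x} with hS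
    have hSclosed : IsClosed S := isClosed_Icc.inter hfixclosed
    have hSne : S.Nonempty := ⟨a, ⟨le_refl a, hx₀.1.le⟩, hga⟩
    have hSbdd : BddAbove S := ⟨x₀, fun x hx => hx.1.2⟩
    set c := sSup S with hcdef
    have hcS : c ∈ S := hSclosed.csSup_mem hSne hSbdd
    have hac : a ≤ c := le_csSup hSbdd ⟨⟨le_refl a, hx₀.1.le⟩, hga⟩
    have hcx₀ : c < x₀ := lt_of_le_of_ne hcS.1.2 (fun h => hgx₀ (h ▸ hcS.2))
    -- right suborbital endpoint
    set T := Set.Icc x₀ b ∩ {x : ℝ | g x = x} with hT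
    have hTclosed : IsClosed T := isClosed_Icc.inter hfixclosed
    have hTne : T.Nonempty := ⟨b, ⟨hx₀.2.le, le_refl b⟩, hgb⟩
    have hTbdd : BddBelow T := ⟨x₀, fun x hx => hx.1.1⟩
    set d := sInf T with hddef
    have hdT : d ∈ T := hTclosed.csInf_mem hTne hTbdd
    have hdb : d ≤ b := hdT.1.2
    have hx₀d : x₀ < d := lt_of_le_of_ne hdT.1.1 (fun h => hgx₀ (h ▸ hdT.2))
    -- (c, d) is an orbital of g
    have horbg : IsOrbital g c d := by
      refine ⟨hcx₀.trans hx₀d, ?_, hcS.2, hdT.2⟩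
      intro x hx hgx
      rcases le_total x x₀ with hle | hle
      · have : x ∈ S := ⟨⟨hac.trans hx.1.le, hle⟩, hgx⟩
        exact absurd (le_csSup hSbdd this) (not_le.mpr hx.1)
      · have : x ∈ T := ⟨⟨hle, hx.2.le.trans hdb⟩, hgx⟩
        exact absurd (csInf_le hTbdd this) (not_le.mpr hx.2)
    obtain ⟨hfc, hfd⟩ := endfix hg hf (by rw [hcomm]) horbg
    have hca : c = a := by
      by_contra hne
      have : c ∈ Set.Ioo a b := ⟨lt_of_le_of_ne hac (Ne.symm hne), hcx₀.trans hx₀.2⟩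
      exact horb.2.1 this hfc
    have hdbeq : d = b := by
      by_contra hne
      have : d ∈ Set.Ioo a b := ⟨hx₀.1.trans hx₀d, lt_of_le_of_ne hdb hne⟩
      exact horb.2.1 this hfd
    refine ⟨horb.1, ?_, hga, hgb⟩
    intro x hx
    exact horbg.2.1 (by rw [hca, hdbeq]; exact hx)
end

section
/- Let f₀, f₁ ∈ PL₀(I) satisfy the relations [f₀f₁⁻¹, f₀⁻¹f₁f₀] = 1 and [f₀f₁⁻¹, f₀⁻²f₁f₀²] = 1. Let (a,c) be an orbital of f₀ on which f₀(x) > x, which is not an orbital of f₁, and suppose f₁ has at least one orbital contained in (a,c). Let (b₁,d₁) be the smallest orbital of f₁ contained in (a,c). Then a < b₁, i.e., f₁ fixes a neighborhood of a within [a,c]. -/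
open Set Filter Topology


open scoped commutatorElement

/-- The two defining relations `[f₀f₁⁻¹, f₁^{f₀}] = 1` and `[f₀f₁⁻¹, f₁^{f₀²}] = 1`
of Thompson's group `F`, for the pair `(f₀, f₁)`.  The paper composes in word order
(functions act on the right), so the paper's word `f₀f₁⁻¹` is the group element
`f₁⁻¹ * f₀` in Mathlib's left-action convention, and the conjugate
`f₁^{f₀} = f₀⁻¹f₁f₀` is the element `f₀ * f₁ * f₀⁻¹`.  Recall `⁅a,b⁆ = 1 ↔ a*b = b*a`. -/
def ThompsonRel (f₀ f₁ : Equiv.Perm ℝ) : Prop :=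
  ⁅f₁⁻¹ * f₀, f₀ * f₁ * f₀⁻¹⁆ = 1 ∧ ⁅f₁⁻¹ * f₀, f₀ ^ 2 * f₁ * (f₀ ^ 2)⁻¹⁆ = 1


private lemma perm_inv_apply_self (e : Equiv.Perm ℝ) (x : ℝ) : e⁻¹ (e x) = x :=
  Equiv.symm_apply_apply e x

private lemma perm_apply_inv_self (e : Equiv.Perm ℝ) (x : ℝ) : e (e⁻¹ x) = x :=
  Equiv.apply_symm_apply e x

private lemma continuous_perm (f : Equiv.Perm ℝ) (hm : StrictMono ⇑f) : Continuous ⇑f := by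
  have h := (StrictMono.orderIsoOfSurjective ⇑f hm f.surjective).continuous
  rwa [StrictMono.coe_orderIsoOfSurjective] at h

private lemma strictMono_inv (f : Equiv.Perm ℝ) (h : StrictMono ⇑f) : StrictMono ⇑f⁻¹ := by
  intro x y hxy
  rw [← h.lt_iff_lt]
  simpa using hxy

private lemma commute_apply {A g : Equiv.Perm ℝ} (h : Commute A g) (x : ℝ) :
    A (g x) = g (A x) := by
  have := congrArg (fun e : Equiv.Perm ℝ => e x) h.eq
  simpa [Equiv.Perm.mul_apply] using this

private lemma perm_iterate (g : Equiv.Perm ℝ) (n : ℕ) (x : ℝ) : (⇑g)^[n] x = (g ^ n) x := by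
  rw [Equiv.Perm.iterate_eq_pow]

private lemma iterate_up {g : ℝ → ℝ} (hm : StrictMono g) (hc : Continuous g)
    {p q z : ℝ} (hq : g q = q) (hz : z ∈ Set.Ioo p q) (hgz : z < g z)
    (hfix : ∀ x ∈ Set.Ioo p q, g x ≠ x) :
    (∀ n, g^[n] z ∈ Set.Ioo p q) ∧ StrictMono (fun n => g^[n] z) ∧
      Filter.Tendsto (fun n => g^[n] z) Filter.atTop (nhds q) := by
  have key : ∀ n : ℕ, g^[n] z ∈ Set.Ioo p q ∧ g^[n] z < g^[n + 1] z := by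
    intro n
    induction n with
    | zero => exact ⟨hz, by simpa using hgz⟩
    | succ n ih =>
      obtain ⟨⟨hp1, hq1⟩, hlt⟩ := ih
      have h1 : g^[n + 1] z = g (g^[n] z) := Function.iterate_succ_apply' g n z
      have h2 : g^[n + 2] z = g (g^[n + 1] z) := Function.iterate_succ_apply' g (n + 1) z
      have hmem : g^[n + 1] z ∈ Set.Ioo p q := by
        refine ⟨hp1.trans hlt, ?_⟩
        rw [h1]
        calc g (g^[n] z) < g q := hm hq1
          _ = q := hq
      refine ⟨hmem, ?_⟩
      have h4 := hm hlt
      rw [← h1] at h4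
      rw [h2]
      exact h4
  have hmem := fun n => (key n).1
  have hsm : StrictMono (fun n => g^[n] z) := strictMono_nat_of_lt_succ (fun n => (key n).2)
  have hbdd : BddAbove (Set.range fun n => g^[n] z) := by
    refine ⟨q, ?_⟩
    rintro x ⟨n, rfl⟩
    exact (hmem n).2.le
  have htend := tendsto_atTop_ciSup hsm.monotone hbdd
  set L := ⨆ n, g^[n] z with hL
  have hLq : L ≤ q := ciSup_le fun n => (hmem n).2.le
  have hpL : p < L := lt_of_lt_of_le (hmem 0).1 (le_ciSup hbdd 0)
  have hgL : g L = L := by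
    have t1 : Filter.Tendsto (fun n => g (g^[n] z)) Filter.atTop (nhds (g L)) :=
      (hc.tendsto L).comp htend
    have t2 : Filter.Tendsto (fun n => g^[n + 1] z) Filter.atTop (nhds L) :=
      htend.comp (Filter.tendsto_add_atTop_nat 1)
    have he : (fun n => g (g^[n] z)) = fun n => g^[n + 1] z := by
      funext n
      exact (Function.iterate_succ_apply' g n z).symm
    rw [he] at t1
    exact tendsto_nhds_unique t1 t2
  have hLq' : L = q := by
    rcases eq_or_lt_of_le hLq with h | h
    · exact h
    · exact absurd hgL (hfix L ⟨hpL, h⟩)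
  exact ⟨hmem, hsm, hLq' ▸ htend⟩

private lemma seq_up (h' : Equiv.Perm ℝ) (hm : StrictMono ⇑h') {p q z : ℝ}
    (horb : IsOrbital h' p q) (hz : z ∈ Set.Ioo p q) :
    ∃ u : ℕ → ℝ, StrictMono u ∧ (∀ n, u n ∈ Set.Ioo p q) ∧
      Filter.Tendsto u Filter.atTop (nhds q) ∧
      ∀ n, ∃ g : Equiv.Perm ℝ, u n = g z ∧
        ∀ A : Equiv.Perm ℝ, Commute A h' → Commute A g := by
  have hfix : ∀ x ∈ Set.Ioo p q, ⇑h' x ≠ x := fun x hx => horb.2.1 hx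
  have hq : h' q = q := horb.2.2.2
  have hzne : h' z ≠ z := hfix z hz
  rcases lt_or_gt_of_ne hzne with hlt | hgt
  · -- h' z < z, iterate h'⁻¹
    have hmi := strictMono_inv h' hm
    have hci := continuous_perm h'⁻¹ hmi
    have hzi : z < h'⁻¹ z := by
      have h2 := hmi hlt
      rwa [perm_inv_apply_self] at h2
    have hqi : ⇑h'⁻¹ q = q := by
      nth_rewrite 1 [← hq]
      exact perm_inv_apply_self h' q
    have hfixi : ∀ x ∈ Set.Ioo p q, ⇑h'⁻¹ x ≠ x := by
      intro x hx he
      have h3 := congrArg ⇑h' he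
      rw [perm_apply_inv_self] at h3
      exact hfix x hx h3.symm
    obtain ⟨hmem, hsm, htd⟩ := iterate_up hmi hci hqi hz hzi hfixi
    exact ⟨_, hsm, hmem, htd, fun n =>
      ⟨h'⁻¹ ^ n, (perm_iterate h'⁻¹ n z).symm ▸ rfl,
        fun A hA => (hA.inv_right).pow_right n⟩⟩
  · obtain ⟨hmem, hsm, htd⟩ := iterate_up hm (continuous_perm h' hm) hq hz hgt hfix
    exact ⟨_, hsm, hmem, htd, fun n =>
      ⟨h' ^ n, (perm_iterate h' n z).symm ▸ rfl, fun A hA => hA.pow_right n⟩⟩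

private lemma inv_mem_Ioo {g : Equiv.Perm ℝ} (hg : StrictMono ⇑g) {p q x : ℝ}
    (hx : x ∈ Set.Ioo (g p) (g q)) : ⇑g⁻¹ x ∈ Set.Ioo p q := by
  constructor
  · have h1 : g p < g (g⁻¹ x) := by rw [perm_apply_inv_self]; exact hx.1
    exact hg.lt_iff_lt.mp h1
  · have h1 : g (g⁻¹ x) < g q := by rw [perm_apply_inv_self]; exact hx.2
    exact hg.lt_iff_lt.mp h1

private lemma isOrbital_conj {f g : Equiv.Perm ℝ} (hg : StrictMono ⇑g) {p q : ℝ}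
    (h : IsOrbital f p q) : IsOrbital (g * f * g⁻¹) (g p) (g q) := by
  obtain ⟨hpq, hsupp, hp, hq⟩ := h
  refine ⟨hg hpq, ?_, ?_, ?_⟩
  · intro x hx hfx
    have hx' := inv_mem_Ioo hg hx
    have h1 : (g * f * g⁻¹) x = g (f (g⁻¹ x)) := rfl
    rw [h1] at hfx
    have h2 : g (f (g⁻¹ x)) = g (g⁻¹ x) := by rw [hfx, perm_apply_inv_self]
    exact hsupp hx' (g.injective h2)
  · show g (f (g⁻¹ (g p))) = g p
    rw [perm_inv_apply_self, hp]
  · show g (f (g⁻¹ (g q))) = g q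
    rw [perm_inv_apply_self, hq]

private lemma isOrbital_map {f A : Equiv.Perm ℝ} (hA : StrictMono ⇑A)
    (hcom : Commute A f) {p q : ℝ} (h : IsOrbital f p q) :
    IsOrbital f (A p) (A q) := by
  obtain ⟨hpq, hsupp, hp, hq⟩ := h
  refine ⟨hA hpq, ?_, ?_, ?_⟩
  · intro x hx hfx
    have hx' := inv_mem_Ioo hA hx
    have h1 : f (A (A⁻¹ x)) = A (A⁻¹ x) := by rwa [perm_apply_inv_self]
    rw [← commute_apply hcom] at h1
    exact hsupp hx' (A.injective h1)
  · rw [← commute_apply hcom, hp]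
  · rw [← commute_apply hcom, hq]

private lemma isOrbital_right_unique {f : Equiv.Perm ℝ} {p q q' : ℝ}
    (h : IsOrbital f p q) (h' : IsOrbital f p q') : q = q' := by
  rcases lt_trichotomy q q' with h1 | h1 | h1
  · exact absurd (h'.2.1 ⟨h.1, h1⟩) (by simp [Supp, h.2.2.2])
  · exact h1
  · exact absurd (h.2.1 ⟨h'.1, h1⟩) (by simp [Supp, h'.2.2.2])

private lemma two_pts_nhds {x s t s' t' : ℝ}
    (h : ∀ᶠ y in nhds x, s * y + t = s' * y + t') : s = s' ∧ t = t' := by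
  obtain ⟨ε, hε, hb⟩ := Metric.eventually_nhds_iff.mp h
  have h1 : s * x + t = s' * x + t' := hb (by simp [hε])
  have h2 : s * (x + ε / 2) + t = s' * (x + ε / 2) + t' := by
    refine hb ?_
    rw [Real.dist_eq]
    rw [show x + ε / 2 - x = ε / 2 by ring, abs_of_pos (by linarith)]
    linarith
  have hs : s = s' := by nlinarith
  refine ⟨hs, ?_⟩
  rw [hs] at h1
  linarith

private lemma affine_on_Ioo {f : ℝ → ℝ} {p q : ℝ} (hpq : p < q)
    (h : ∀ x ∈ Set.Ioo p q, ∃ s t : ℝ, ∀ᶠ y in nhds x, f y = s * y + t) :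
    ∃ s t : ℝ, ∀ x ∈ Set.Ioo p q, f x = s * x + t := by
  have hmid : (p + q) / 2 ∈ Set.Ioo p q := ⟨by linarith, by linarith⟩
  obtain ⟨s, t, h0⟩ := h _ hmid
  set U : Set ℝ := {x | ∀ᶠ y in nhds x, f y = s * y + t} with hUdef
  set V : Set ℝ := {x | ∃ s' t' : ℝ, ¬(s' = s ∧ t' = t) ∧ ∀ᶠ y in nhds x, f y = s' * y + t'}
    with hVdef
  have hUopen : IsOpen U := by
    rw [isOpen_iff_mem_nhds]
    intro x hx
    exact eventually_eventually_nhds.mpr hx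
  have hVopen : IsOpen V := by
    rw [isOpen_iff_mem_nhds]
    intro x hx
    obtain ⟨s', t', hne, hev⟩ := hx
    exact (eventually_eventually_nhds.mpr hev).mono fun y hy => ⟨s', t', hne, hy⟩
  have hdisj : ∀ x, x ∈ U → x ∈ V → False := by
    intro x hxU hxV
    obtain ⟨s', t', hne, hev⟩ := hxV
    have : ∀ᶠ y in nhds x, s * y + t = s' * y + t' := by
      filter_upwards [hxU, hev] with y h1 h2
      rw [← h1, ← h2]
    obtain ⟨hs, ht⟩ := two_pts_nhds this
    exact hne ⟨hs.symm, ht.symm⟩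
  have hcover : Set.Ioo p q ⊆ U ∪ V := by
    intro x hx
    obtain ⟨s', t', hev⟩ := h x hx
    by_cases hc : s' = s ∧ t' = t
    · left
      rw [hUdef]
      simpa [hc.1, hc.2] using hev
    · exact Or.inr ⟨s', t', hc, hev⟩
  have hsub : Set.Ioo p q ⊆ U := by
    by_contra hnsub
    obtain ⟨x, hx, hxU⟩ := not_subset.mp hnsub
    have hxV : x ∈ V := (hcover hx).resolve_left hxU
    obtain ⟨y, hy, hyU, hyV⟩ :=
      isPreconnected_Ioo (u := U) (v := V) hUopen hVopen hcover
        ⟨(p + q) / 2, hmid, h0⟩ ⟨x, hx, hxV⟩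
    exact hdisj y hyU hyV
  exact ⟨s, t, fun x hx => (hsub hx).self_of_nhds⟩

def LocPL (f : ℝ → ℝ) : Prop :=
  ∃ B : Finset ℝ, ∀ x : ℝ, x ∉ B → ∃ s t : ℝ, ∀ᶠ y in nhds x, f y = s * y + t

private lemma locPL_inv (f : Equiv.Perm ℝ) (hm : StrictMono ⇑f) (h : LocPL ⇑f) :
    LocPL ⇑f⁻¹ := by
  classical
  obtain ⟨B, hB⟩ := h
  have hfic : Continuous ⇑f⁻¹ := continuous_perm f⁻¹ (strictMono_inv f hm)
  refine ⟨B.image ⇑f, fun x hx => ?_⟩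
  have hxB : ⇑f⁻¹ x ∉ B := by
    intro hmem
    exact hx (Finset.mem_image.mpr ⟨_, hmem, by simp⟩)
  obtain ⟨s, t, hst⟩ := hB _ hxB
  obtain ⟨ε, hε, hball⟩ := Metric.eventually_nhds_iff.mp hst
  have h1 : f (f⁻¹ x) = s * (f⁻¹ x) + t := hball (by simp [hε])
  have h2 : f (f⁻¹ x + ε / 2) = s * (f⁻¹ x + ε / 2) + t := by
    refine hball ?_
    rw [Real.dist_eq, show f⁻¹ x + ε / 2 - f⁻¹ x = ε / 2 by ring,
      abs_of_pos (by linarith)]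
    linarith
  have hs : 0 < s := by
    have hlt : f (f⁻¹ x) < f (f⁻¹ x + ε / 2) := hm (by linarith)
    nlinarith
  refine ⟨1 / s, -t / s, ?_⟩
  have hev : ∀ᶠ y in nhds x, ⇑f⁻¹ y ∈ Metric.ball (⇑f⁻¹ x) ε := by
    have hcont : ContinuousAt ⇑f⁻¹ x := hfic.continuousAt
    exact hcont.preimage_mem_nhds (Metric.ball_mem_nhds _ hε)
  filter_upwards [hev] with y hy
  have h3 : f (f⁻¹ y) = s * (f⁻¹ y) + t := hball (by simpa [Metric.mem_ball] using hy)
  rw [perm_apply_inv_self] at h3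
  have h5 : ⇑f⁻¹ y = (y - t) / s := by
    rw [eq_div_iff (ne_of_gt hs)]
    linarith
  rw [h5]
  ring

private lemma locPL_mul (g h : Equiv.Perm ℝ) (hg : LocPL ⇑g) (hh : LocPL ⇑h)
    (hhc : Continuous ⇑h) : LocPL ⇑(g * h) := by
  classical
  obtain ⟨Bg, hBg⟩ := hg
  obtain ⟨Bh, hBh⟩ := hh
  refine ⟨Bh ∪ Bg.image ⇑h⁻¹, fun x hx => ?_⟩
  rw [Finset.mem_union, not_or] at hx
  obtain ⟨s, t, hst⟩ := hBh x hx.1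
  have hhx : h x ∉ Bg := by
    intro hmem
    exact hx.2 (Finset.mem_image.mpr ⟨_, hmem, by simp⟩)
  obtain ⟨s', t', hst'⟩ := hBg (h x) hhx
  refine ⟨s' * s, s' * t + t', ?_⟩
  have h1 : ∀ᶠ y in nhds x, g (h y) = s' * (h y) + t' :=
    hhc.continuousAt.eventually hst'
  filter_upwards [h1, hst] with y hy1 hy2
  have : (g * h) y = g (h y) := rfl
  rw [this, hy1, hy2]
  ring

private lemma exists_left_gap (S : Finset ℝ) {a r : ℝ} (h : a < r) :
    ∃ m : ℝ, a ≤ m ∧ m < r ∧ ∀ x ∈ S, x ∉ Set.Ioo m r := by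
  classical
  set T := insert a (S.filter (· < r)) with hT
  have hne : T.Nonempty := ⟨a, Finset.mem_insert_self _ _⟩
  refine ⟨T.max' hne, Finset.le_max' T a (Finset.mem_insert_self _ _), ?_, ?_⟩
  · rw [Finset.max'_lt_iff]
    intro x hx
    rcases Finset.mem_insert.mp hx with rfl | hx
    · exact h
    · exact (Finset.mem_filter.mp hx).2
  · rintro x hxS ⟨h1, h2⟩
    have hmem : x ∈ T := Finset.mem_insert_of_mem (Finset.mem_filter.mpr ⟨hxS, h2⟩)
    exact absurd (Finset.le_max' T x hmem) (not_le.mpr h1)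

/-- Suppose `f₀, f₁ ∈ PL₀(I)` satisfy the two standard relations of Thompson's group
`F`, `(a,c)` is an orbital of `f₀` on which `f₀ x > x` (an up-bump), `(a,c)` is not
an orbital of `f₁`, and `(b₁,d₁)` is the smallest orbital of `f₁` contained in
`(a,c)`.  Then `a < b₁`: the function `f₁` fixes a neighborhood of `a` within
`[a,c]`. -/
theorem first_orbital_left_gap (f₀ f₁ : Equiv.Perm ℝ)
    (h₀ : IsPL0 f₀) (h₁ : IsPL0 f₁) (hrel : ThompsonRel f₀ f₁) (a c : ℝ)
    (horb₀ : IsOrbital f₀ a c) (hup : ∀ x ∈ Set.Ioo a c, x < f₀ x)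
    (hne : ¬ IsOrbital f₁ a c) (b₁ d₁ : ℝ)
    (horb₁ : IsOrbital f₁ b₁ d₁) (hsub : Set.Ioo b₁ d₁ ⊆ Set.Ioo a c)
    (hmin : ∀ b d : ℝ, IsOrbital f₁ b d → Set.Ioo b d ⊆ Set.Ioo a c → b₁ ≤ b) :
    a < b₁ := by

  by_contra hcon
  push_neg at hcon
  have hb1d : b₁ < d₁ := horb₁.1
  have hab : b₁ = a := by
    rcases eq_or_lt_of_le hcon with h | hba
    · exact h
    · exfalso
      have hmin' : b₁ < min a d₁ := lt_min hba hb1d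
      have hx1 : b₁ < (b₁ + min a d₁) / 2 := by linarith
      have hx2 : (b₁ + min a d₁) / 2 < min a d₁ := by linarith
      have h3 := (hsub ⟨hx1, hx2.trans_le (min_le_right _ _)⟩).1
      have h4 : (b₁ + min a d₁) / 2 < a := hx2.trans_le (min_le_left _ _)
      linarith
  subst hab
  have hdc' : d₁ ≤ c := by
    by_contra hcd
    push_neg at hcd
    have hmax : max b₁ c < d₁ := max_lt hb1d hcd
    have hx1 : max b₁ c < (max b₁ c + d₁) / 2 := by linarith
    have hx2 : (max b₁ c + d₁) / 2 < d₁ := by linarith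
    have h3 := (hsub ⟨(le_max_left b₁ c).trans_lt hx1, hx2⟩).2
    have h4 : c < (max b₁ c + d₁) / 2 := (le_max_right b₁ c).trans_lt hx1
    linarith
  have hdc : d₁ < c := by
    rcases eq_or_lt_of_le hdc' with h | h
    · exact absurd (h ▸ horb₁) hne
    · exact h
  have hs₀ : StrictMono ⇑f₀ := h₀.1
  have hs₁ : StrictMono ⇑f₁ := h₁.1
  have hf₀a : f₀ b₁ = b₁ := horb₀.2.2.1
  have hf₀c : f₀ c = c := horb₀.2.2.2
  have hf₁a : f₁ b₁ = b₁ := horb₁.2.2.1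
  have hf₁d : f₁ d₁ = d₁ := horb₁.2.2.2
  have had : b₁ < d₁ := horb₁.1
  have hd_r : d₁ < f₀ d₁ := hup d₁ ⟨had, hdc⟩
  have hrc : f₀ d₁ < c := by
    have h5 := hs₀ hdc
    rwa [hf₀c] at h5
  have har : b₁ < f₀ d₁ := had.trans hd_r
  have hr_r2 : f₀ d₁ < f₀ (f₀ d₁) := hup (f₀ d₁) ⟨har, hrc⟩
  have hcomB : Commute (f₁⁻¹ * f₀) (f₀ * f₁ * f₀⁻¹) :=
    commutatorElement_eq_one_iff_commute.mp hrel.1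
  have hcomC : Commute (f₁⁻¹ * f₀) (f₀ ^ 2 * f₁ * (f₀ ^ 2)⁻¹) :=
    commutatorElement_eq_one_iff_commute.mp hrel.2
  have hsA : StrictMono ⇑(f₁⁻¹ * f₀) := by
    have h5 : ⇑(f₁⁻¹ * f₀) = ⇑f₁⁻¹ ∘ ⇑f₀ := rfl
    rw [h5]
    exact (strictMono_inv f₁ hs₁).comp hs₀
  have hs02 : StrictMono ⇑(f₀ ^ 2) := by
    have h5 : ⇑(f₀ ^ 2) = ⇑f₀ ∘ ⇑f₀ := by rw [sq]; rfl
    rw [h5]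
    exact hs₀.comp hs₀
  have hsC : StrictMono ⇑(f₀ ^ 2 * f₁ * (f₀ ^ 2)⁻¹) := by
    have h5 : ⇑(f₀ ^ 2 * f₁ * (f₀ ^ 2)⁻¹) = ⇑(f₀ ^ 2) ∘ ⇑f₁ ∘ ⇑(f₀ ^ 2)⁻¹ := rfl
    rw [h5]
    exact hs02.comp (hs₁.comp (strictMono_inv _ hs02))
  have horbB : IsOrbital (f₀ * f₁ * f₀⁻¹) b₁ (f₀ d₁) := by
    have h5 := isOrbital_conj (f := f₁) (g := f₀) hs₀ horb₁
    rwa [hf₀a] at h5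
  have h2a : (f₀ ^ 2) b₁ = b₁ := by
    have h5 : (f₀ ^ 2) b₁ = f₀ (f₀ b₁) := by rw [sq]; rfl
    rw [h5, hf₀a, hf₀a]
  have h2d : (f₀ ^ 2) d₁ = f₀ (f₀ d₁) := by rw [sq]; rfl
  have horbC : IsOrbital (f₀ ^ 2 * f₁ * (f₀ ^ 2)⁻¹) b₁ (f₀ (f₀ d₁)) := by
    have h5 := isOrbital_conj (f := f₁) (g := f₀ ^ 2) hs02 horb₁
    rwa [h2a, h2d] at h5
  have hf₁ia : ⇑f₁⁻¹ b₁ = b₁ := by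
    nth_rewrite 1 [← hf₁a]
    exact perm_inv_apply_self f₁ b₁
  have hf₁id : ⇑f₁⁻¹ d₁ = d₁ := by
    nth_rewrite 1 [← hf₁d]
    exact perm_inv_apply_self f₁ d₁
  have hAa : (f₁⁻¹ * f₀) b₁ = b₁ := by
    show f₁⁻¹ (f₀ b₁) = b₁
    rw [hf₀a, hf₁ia]
  have hAr : (f₁⁻¹ * f₀) (f₀ d₁) = f₀ d₁ := by
    have o1 := isOrbital_map hsA hcomB horbB
    rw [hAa] at o1
    exact isOrbital_right_unique o1 horbB
  have hAd : d₁ < (f₁⁻¹ * f₀) d₁ := by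
    have h5 := strictMono_inv f₁ hs₁ hd_r
    rw [hf₁id] at h5
    exact h5
  have hAdne : (f₁⁻¹ * f₀) d₁ ≠ d₁ := ne_of_gt hAd
  obtain ⟨v, hvmono, hvmem, hvtend, hvg⟩ :=
    seq_up (f₀ ^ 2 * f₁ * (f₀ ^ 2)⁻¹) hsC horbC (z := f₀ d₁) ⟨har, hr_r2⟩
  obtain ⟨w, hwmono, hwmem, hwtend, hwg⟩ :=
    seq_up (f₀ ^ 2 * f₁ * (f₀ ^ 2)⁻¹) hsC horbC (z := d₁) ⟨had, hd_r.trans hr_r2⟩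
  have hvfix : ∀ n, (f₁⁻¹ * f₀) (v n) = v n := by
    intro n
    obtain ⟨g, hg, hcg⟩ := hvg n
    rw [hg, commute_apply (hcg _ hcomC), hAr]
  have hwmov : ∀ n, (f₁⁻¹ * f₀) (w n) ≠ w n := by
    intro n
    obtain ⟨g, hg, hcg⟩ := hwg n
    rw [hg, commute_apply (hcg _ hcomC)]
    intro hcontra
    exact hAdne (g.injective hcontra)
  have hlpA : LocPL ⇑(f₁⁻¹ * f₀) :=
    locPL_mul f₁⁻¹ f₀ (locPL_inv f₁ hs₁ h₁.2.2.2) h₀.2.2.2 (continuous_perm f₀ hs₀)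
  obtain ⟨S, hS⟩ := hlpA
  obtain ⟨m, ham, hmr2, hgap⟩ := exists_left_gap S (har.trans hr_r2)
  obtain ⟨s, t, haff⟩ :=
    affine_on_Ioo hmr2 (fun x hx => hS x (fun hmem => hgap x hmem hx))
  obtain ⟨N, hN⟩ := (hvtend.eventually (eventually_gt_nhds hmr2)).exists
  obtain ⟨K, hK⟩ := (hwtend.eventually (eventually_gt_nhds hmr2)).exists
  have hz1 : v N ∈ Set.Ioo m (f₀ (f₀ d₁)) := ⟨hN, (hvmem N).2⟩
  have hz2 : v (N + 1) ∈ Set.Ioo m (f₀ (f₀ d₁)) :=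
    ⟨hN.trans (hvmono (Nat.lt_succ_self N)), (hvmem (N + 1)).2⟩
  have he1 : s * v N + t = v N := by rw [← haff _ hz1]; exact hvfix N
  have he2 : s * v (N + 1) + t = v (N + 1) := by rw [← haff _ hz2]; exact hvfix (N + 1)
  have hvlt : v N < v (N + 1) := hvmono (Nat.lt_succ_self N)
  have hs1 : s = 1 := by nlinarith
  have ht0 : t = 0 := by rw [hs1] at he1; linarith
  refine hwmov K ?_
  rw [haff _ ⟨hK, (hwmem K).2⟩, hs1, ht0]
  ring
end
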